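/- Let A, B ∈ Λ_{ℤ,univ} = HahnSeries ℝ ℤ with B ≠ 0, and let b₀ ∈ ℤ be the leading coefficient of B (the coefficient of B at its order ν(B)). Then every coefficient of the quotient A/B, computed in the field Λ_{ℚ,univ} = HahnSeries ℝ ℚ, lies in the subring ℤ[1/b₀] of ℚ; that is, each coefficient can be written as n/b₀^k for some n ∈ ℤ and k ∈ ℕ. -/

import Mathlib

/-!
STATEMENT 1: For `A, B ∈ Λ_{ℤ,univ} = HahnSeries ℝ ℤ` with `B ≠ 0` and `b₀` the leading
coefficient of `B` (the coefficient of `B` at its order), every coefficient of the quotient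
`A/B`, computed in the field `Λ_{ℚ,univ} = HahnSeries ℝ ℚ`, lies in the subring `ℤ[1/b₀]`:
it can be written as `n / b₀^k` with `n ∈ ℤ`, `k ∈ ℕ`.
-/

noncomputable section

/-- The canonical coefficientwise embedding `Λ_{ℤ,univ} → Λ_{ℚ,univ}`. -/
def iota (x : HahnSeries ℝ ℤ) : HahnSeries ℝ ℚ := x.map (Int.castRingHom ℚ)

/-- The subring `ℤ[1/b₀]` of `ℚ`. -/
def zOneOver (b₀ : ℤ) (hb : (b₀ : ℚ) ≠ 0) : Subring ℚ where
  carrier := {q | ∃ (n : ℤ) (k : ℕ), q = (n : ℚ) / (b₀ : ℚ) ^ k}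
  zero_mem' := ⟨0, 0, by simp⟩
  one_mem' := ⟨1, 0, by simp⟩
  add_mem' := by
    rintro _ _ ⟨n, k, rfl⟩ ⟨m, j, rfl⟩
    refine ⟨n * b₀ ^ j + m * b₀ ^ k, k + j, ?_⟩
    rw [div_add_div _ _ (pow_ne_zero k hb) (pow_ne_zero j hb), pow_add]
    push_cast; ring
  mul_mem' := by
    rintro _ _ ⟨n, k, rfl⟩ ⟨m, j, rfl⟩
    exact ⟨n * m, k + j, by push_cast; rw [pow_add]; ring⟩
  neg_mem' := by
    rintro _ ⟨n, k, rfl⟩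
    exact ⟨-n, k, by push_cast; ring⟩

theorem novikov_quotient_coeff_denominators
    (A B : HahnSeries ℝ ℤ) (hB : B ≠ 0) (b₀ : ℤ) (hb₀ : b₀ = B.coeff B.order) :
    ∀ r : ℝ, ∃ (n : ℤ) (k : ℕ),
      (iota A / iota B).coeff r = (n : ℚ) / (b₀ : ℚ) ^ k := by
  have hb0 : b₀ ≠ 0 := hb₀ ▸ HahnSeries.coeff_order_eq_zero.not.mpr hB
  have hbq : (b₀ : ℚ) ≠ 0 := Int.cast_ne_zero.mpr hb0
  set S := zOneOver b₀ hbq with hS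
  -- lift A, B to HahnSeries ℝ S
  set f : ℤ →+* S := Int.castRingHom S with hf
  set A' : HahnSeries ℝ S := A.map f with hA'
  set B' : HahnSeries ℝ S := B.map f with hB'
  have hcoe : ∀ (x : HahnSeries ℝ ℤ) (r : ℝ), (((x.map f).coeff r : S) : ℚ) = (x.coeff r : ℚ) := by
    intro x r
    simp [HahnSeries.map_coeff, hf]
  have hinj : ∀ (x : HahnSeries ℝ ℤ) (r : ℝ), (x.map f).coeff r = 0 ↔ x.coeff r = 0 := by
    intro x r
    constructor
    · intro h
      have := hcoe x r
      rw [h] at this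
      exact_mod_cast this.symm
    · intro h; simp [HahnSeries.map_coeff, h]
  have hB'ne : B' ≠ 0 := by
    intro h
    apply (HahnSeries.coeff_order_eq_zero (x := B)).not.mpr hB
    rw [← hinj B B.order, ← hB', h, HahnSeries.coeff_zero]
  have horder : B'.order = B.order := by
    apply le_antisymm
    · apply HahnSeries.order_le_of_coeff_ne_zero
      rw [ne_eq, hB', hinj]
      exact HahnSeries.coeff_order_eq_zero.not.mpr hB
    · apply HahnSeries.order_le_of_coeff_ne_zero
      rw [ne_eq, ← hinj, ← hB']
      exact HahnSeries.coeff_order_eq_zero.not.mpr hB'ne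
  -- the leading coefficient of B' is a unit in S
  have hlead : B'.leadingCoeff = f b₀ := by
    rw [HahnSeries.leadingCoeff_eq, horder, hB', HahnSeries.map_coeff, hb₀]
  have hunit : IsUnit B'.leadingCoeff := by
    rw [hlead]
    refine IsUnit.of_mul_eq_one ⟨(b₀ : ℚ)⁻¹, 1, 1, by simp⟩ ?_
    apply Subtype.ext
    push_cast
    show ((b₀ : ℚ)) * (b₀ : ℚ)⁻¹ = 1
    field_simp
  have hBunit : IsUnit B' := HahnSeries.isUnit_iff.mpr hunit
  obtain ⟨u, hu⟩ := hBunit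
  set Q : HahnSeries ℝ S := (↑u⁻¹ : HahnSeries ℝ S) * A' with hQ
  have hBQ : B' * Q = A' := by
    rw [hQ, ← mul_assoc, ← hu, u.mul_inv, one_mul]
  -- push down to ℚ
  set g : S →+* ℚ := S.subtype with hg
  have hmap : ∀ x : HahnSeries ℝ ℤ, (x.map f).map g = x.map (Int.castRingHom ℚ) := by
    intro x; ext r; simp [HahnSeries.map_coeff, hf, hg]
  have key : iota B * Q.map g = iota A := by
    have := congrArg (fun x : HahnSeries ℝ S => x.map (g : S →ₙ+* ℚ)) hBQ
    have hcg : ∀ x : HahnSeries ℝ S, x.map (g : S →ₙ+* ℚ) = x.map g := fun x => rfl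
    rw [HahnSeries.map_mul] at this
    simpa [hcg, hA', hB', hmap, iota] using this
  intro r
  have hiB : iota B ≠ 0 := by
    intro h
    apply (HahnSeries.coeff_order_eq_zero (x := B)).not.mpr hB
    have := congrArg (fun x : HahnSeries ℝ ℚ => x.coeff B.order) h
    simp only [iota, HahnSeries.map_coeff, HahnSeries.coeff_zero, eq_intCast] at this
    exact_mod_cast this
  have hdiv : iota A / iota B = Q.map g := by
    field_simp
    rw [← key]
  rw [hdiv]
  obtain ⟨n, k, hn⟩ := (Q.coeff r).2
  exact ⟨n, k, by simp [HahnSeries.map_coeff, hg, hn]⟩
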